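/- Let n ≥ 2, ℓ ≥ 1, let v₁,…,vₙ : Fin ℓ → ℝ be nonzero binary vectors, and let t ∈ [0,1], β > 0, δ > 0. Write c(i,j) = ⟨vᵢ, vⱼ⟩/(‖vᵢ‖·‖vⱼ‖) for the cosine similarity, and for each i define Aᵢ = (∑_{j ≠ i} exp(β·(c(i,j)+1)) · (∑_t vⱼ t)) / (∑_{k ≠ i} exp(β·(c(i,k)+1)) + exp(β·(t+1))). Then: (a) if there exist i ≠ j with c(i,j) ≥ t, there exists i with Aᵢ ≥ 1/n; and (b) if c(i,j) ≤ t − δ for all i ≠ j, then Aᵢ ≤ ℓ · n · exp(−β·δ) for every i. -/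
import Mathlib


open Finset

/-- The Euclidean norm of a vector indexed by a finite type. -/
noncomputable def euclNorm {ι : Type*} [Fintype ι] (v : ι → ℝ) : ℝ :=
  Real.sqrt (∑ t, (v t) ^ 2)

/-- The yes/no gap of the attention entries in the construction showing a single
attention unit with input and output MLPs solves `MSD_{n,ℓ,t}`. -/
theorem stmt10 (n ℓ : ℕ) (hn : 2 ≤ n) (hℓ : 1 ≤ ℓ)
    (v : Fin n → Fin ℓ → ℝ)
    (hbin : ∀ i s, v i s = 0 ∨ v i s = 1)
    (hnz : ∀ i, v i ≠ 0)
    (t β δ : ℝ) (ht0 : 0 ≤ t) (ht1 : t ≤ 1) (hβ : 0 < β) (hδ : 0 < δ)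
    (c : Fin n → Fin n → ℝ)
    (hc : ∀ i j, c i j = (∑ s, v i s * v j s) / (euclNorm (v i) * euclNorm (v j)))
    (A : Fin n → ℝ)
    (hA : ∀ i, A i =
      (∑ j ∈ Finset.univ.erase i, Real.exp (β * (c i j + 1)) * (∑ s, v j s)) /
        ((∑ k ∈ Finset.univ.erase i, Real.exp (β * (c i k + 1))) +
          Real.exp (β * (t + 1)))) :
    ((∃ i j : Fin n, i ≠ j ∧ t ≤ c i j) → ∃ i, 1 / (n : ℝ) ≤ A i) ∧
    ((∀ i j : Fin n, i ≠ j → c i j ≤ t - δ) →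
      ∀ i, A i ≤ (ℓ : ℝ) * n * Real.exp (-(β * δ))) := by
  have hv01 : ∀ j s, 0 ≤ v j s ∧ v j s ≤ 1 := by
    intro j s; rcases hbin j s with h | h <;> simp [h]
  have hsum_nonneg : ∀ j, (0:ℝ) ≤ ∑ s, v j s :=
    fun j => Finset.sum_nonneg fun s _ => (hv01 j s).1
  have hsum_le : ∀ j, (∑ s, v j s) ≤ (ℓ:ℝ) := by
    intro j
    calc (∑ s, v j s) ≤ ∑ _s : Fin ℓ, (1:ℝ) :=
          Finset.sum_le_sum fun s _ => (hv01 j s).2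
      _ = ℓ := by simp
  have hsum_ge1 : ∀ j, (1:ℝ) ≤ ∑ s, v j s := by
    intro j
    obtain ⟨s, hs⟩ : ∃ s, v j s ≠ 0 := by
      by_contra h; push_neg at h; exact hnz j (funext h)
    have hs1 : v j s = 1 := (hbin j s).resolve_left hs
    calc (1:ℝ) = v j s := hs1.symm
      _ ≤ ∑ s, v j s := Finset.single_le_sum (fun s _ => (hv01 j s).1) (mem_univ s)
  have hnpos : (0:ℝ) < n := by positivity
  constructor
  · rintro ⟨i0, j0, hne, htc⟩
    have hj0 : j0 ∈ univ.erase i0 := mem_erase.2 ⟨hne.symm, mem_univ _⟩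
    obtain ⟨j, hj, hmax⟩ := Finset.exists_max_image (univ.erase i0) (c i0) ⟨j0, hj0⟩
    refine ⟨i0, ?_⟩
    set M := Real.exp (β * (c i0 j + 1)) with hM
    set N := ∑ j ∈ univ.erase i0, Real.exp (β * (c i0 j + 1)) * (∑ s, v j s) with hN
    set D := (∑ k ∈ univ.erase i0, Real.exp (β * (c i0 k + 1))) + Real.exp (β * (t + 1))
      with hD
    have hMpos : 0 < M := Real.exp_pos _
    have hDpos : 0 < D := by
      have : 0 < Real.exp (β * (t + 1)) := Real.exp_pos _
      have h2 : 0 ≤ ∑ k ∈ univ.erase i0, Real.exp (β * (c i0 k + 1)) :=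
        Finset.sum_nonneg fun k _ => (Real.exp_pos _).le
      linarith
    rw [hA i0, ← hN, ← hD, div_le_div_iff₀ hnpos hDpos]
    have hMN : M ≤ N := by
      calc M = M * 1 := (mul_one M).symm
        _ ≤ M * (∑ s, v j s) := by
            exact mul_le_mul_of_nonneg_left (hsum_ge1 j) hMpos.le
        _ ≤ N :=
            Finset.single_le_sum
              (f := fun k => Real.exp (β * (c i0 k + 1)) * (∑ s, v k s))
              (fun k _ => mul_nonneg (Real.exp_pos _).le (hsum_nonneg k)) hj
    have hDle : D ≤ n * M := by
      have h1 : ∑ k ∈ univ.erase i0, Real.exp (β * (c i0 k + 1)) ≤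
          ((univ.erase i0).card : ℝ) * M := by
        calc ∑ k ∈ univ.erase i0, Real.exp (β * (c i0 k + 1))
            ≤ ∑ _k ∈ univ.erase i0, M := by
              refine Finset.sum_le_sum fun k hk => ?_
              exact Real.exp_le_exp.2 (by nlinarith [hmax k hk])
          _ = ((univ.erase i0).card : ℝ) * M := by
              rw [Finset.sum_const, nsmul_eq_mul]
      have h2 : Real.exp (β * (t + 1)) ≤ M := by
        have := hmax j0 hj0
        have : t ≤ c i0 j := le_trans htc this
        exact Real.exp_le_exp.2 (by nlinarith)
      have hcard' : (univ.erase i0).card = n - 1 := by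
        simp [Finset.card_erase_of_mem, Finset.card_univ]
      rw [hcard'] at h1
      have hcast : ((n - 1 : ℕ) : ℝ) = (n : ℝ) - 1 := by
        have : 1 ≤ n := by omega
        push_cast [this]; ring
      rw [hcast] at h1
      nlinarith
    calc (1:ℝ) * D = D := one_mul D
      _ ≤ n * M := hDle
      _ ≤ N * n := by nlinarith
  · intro hsep i
    set N := ∑ j ∈ univ.erase i, Real.exp (β * (c i j + 1)) * (∑ s, v j s) with hN
    set D := (∑ k ∈ univ.erase i, Real.exp (β * (c i k + 1))) + Real.exp (β * (t + 1))
      with hD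
    have hDge : Real.exp (β * (t + 1)) ≤ D := by
      have h2 : 0 ≤ ∑ k ∈ univ.erase i, Real.exp (β * (c i k + 1)) :=
        Finset.sum_nonneg fun k _ => (Real.exp_pos _).le
      linarith [hD]
    have hDpos : 0 < D := lt_of_lt_of_le (Real.exp_pos _) hDge
    rw [hA i, ← hN, ← hD, div_le_iff₀ hDpos]
    have hNle : N ≤ (n : ℝ) * (Real.exp (β * (t - δ + 1)) * ℓ) := by
      calc N ≤ ∑ _j ∈ univ.erase i, Real.exp (β * (t - δ + 1)) * ℓ := by
            refine Finset.sum_le_sum fun j hj => ?_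
            have hjne : j ≠ i := (mem_erase.1 hj).1
            have hc' : c i j ≤ t - δ := hsep i j (Ne.symm hjne)
            have he : Real.exp (β * (c i j + 1)) ≤ Real.exp (β * (t - δ + 1)) :=
              Real.exp_le_exp.2 (by nlinarith)
            exact mul_le_mul he (hsum_le j) (hsum_nonneg j) (Real.exp_pos _).le
        _ = ((univ.erase i).card : ℝ) * (Real.exp (β * (t - δ + 1)) * ℓ) := by
            rw [Finset.sum_const, nsmul_eq_mul]
        _ ≤ (n : ℝ) * (Real.exp (β * (t - δ + 1)) * ℓ) := by
            have : ((univ.erase i).card : ℝ) ≤ n := by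
              have h := Finset.card_erase_of_mem (mem_univ i)
              rw [h, Finset.card_univ, Fintype.card_fin]
              exact_mod_cast Nat.sub_le n 1
            exact mul_le_mul_of_nonneg_right this
              (by positivity)
    have key : (n : ℝ) * (Real.exp (β * (t - δ + 1)) * ℓ) ≤
        (ℓ : ℝ) * n * Real.exp (-(β * δ)) * D := by
      have h1 : Real.exp (β * (t - δ + 1)) =
          Real.exp (-(β * δ)) * Real.exp (β * (t + 1)) := by
        rw [← Real.exp_add]; ring_nf
      rw [h1]
      have h2 : (ℓ : ℝ) * n * Real.exp (-(β * δ)) * Real.exp (β * (t + 1)) ≤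
          (ℓ : ℝ) * n * Real.exp (-(β * δ)) * D :=
        mul_le_mul_of_nonneg_left hDge (by positivity)
      calc (n : ℝ) * (Real.exp (-(β * δ)) * Real.exp (β * (t + 1)) * ℓ)
          = (ℓ : ℝ) * n * Real.exp (-(β * δ)) * Real.exp (β * (t + 1)) := by ring
        _ ≤ _ := h2
    linarith
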